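/- Define F_n(t) = det 𝓜ᴮ_n with F_{-1}(t) = F_0(t) = 1. Then for n ≥ 1: F_n(t) = Σ_{i=1}^{n} (-1)^{i-1} t^{C(i,2)} F_{n-i}(t) + (-1)^n t^{n^2}. -/

import Mathlib

open Polynomial

/-- The `(n+1) × (n+1)` matrix `𝓜ᴮ_n` over `ℤ[t]`: its `(i, n+1)` entry (1-based) is
`t^{(n-i+1)^2}`, and for `j ≤ n` its `(i,j)` entry is `t^{C(j-i+1,2)}` when
`j - i + 1 ≥ 0` and `0` otherwise. -/
noncomputable def MatB (n : ℕ) : Matrix (Fin (n + 1)) (Fin (n + 1)) (Polynomial ℤ) :=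
  Matrix.of fun i j =>
    if (j : ℕ) = n then (X : Polynomial ℤ) ^ ((n - (i : ℕ)) ^ 2)
    else if (i : ℕ) ≤ (j : ℕ) + 1 then (X : Polynomial ℤ) ^ (((j : ℕ) + 1 - (i : ℕ)).choose 2)
    else 0

lemma matB_shift (n : ℕ) : (MatB (n+1)).submatrix Fin.succ Fin.succ = MatB n := by
  ext i k
  simp only [Matrix.submatrix_apply, MatB, Matrix.of_apply, Fin.val_succ]
  by_cases hk : (k:ℕ) = n
  · rw [if_pos (by omega), if_pos hk]
    have : n + 1 - ((i:ℕ) + 1) = n - (i:ℕ) := by omega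
    rw [this]
  · rw [if_neg (by omega), if_neg hk]
    by_cases hi : (i:ℕ) ≤ (k:ℕ)+1
    · rw [if_pos (by omega), if_pos hi]
      have : (k:ℕ) + 1 + 1 - ((i:ℕ) + 1) = (k:ℕ) + 1 - (i:ℕ) := by omega
      rw [this]
    · rw [if_neg (by omega), if_neg hi]

lemma minor_det : ∀ n : ℕ, ∀ j : Fin (n+2),
    ((MatB (n+1)).submatrix Fin.succ j.succAbove).det =
      if (j:ℕ) = n+1 then 1 else (MatB (n - (j:ℕ))).det := by
  intro n
  induction n with
  | zero =>
    intro j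
    fin_cases j <;>
      simp [Matrix.det_fin_one, MatB, Matrix.det_unique]
  | succ n ih =>
    intro j
    induction j using Fin.cases with
    | zero =>
      rw [Fin.succAbove_zero, matB_shift]
      rw [if_neg (by simp)]
      rfl
    | succ j' =>
      rw [Matrix.det_succ_column_zero, Fin.sum_univ_succ]
      have hz : ∀ i : Fin (n+1),
          ((MatB (n+2)).submatrix Fin.succ j'.succ.succAbove) i.succ 0 = 0 := by
        intro i
        simp only [Matrix.submatrix_apply, Fin.succ_succAbove_zero, MatB,
          Matrix.of_apply, Fin.val_succ]
        rw [if_neg (by simp), if_neg (by simp)]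
      rw [Finset.sum_eq_zero (fun i _ => by rw [hz]; ring), add_zero]
      have h00 : ((MatB (n+2)).submatrix Fin.succ j'.succ.succAbove) 0 0 = 1 := by
        simp only [Matrix.submatrix_apply, Fin.succ_succAbove_zero, MatB,
          Matrix.of_apply, Fin.val_succ]
        rw [if_neg (by simp), if_pos (by simp)]
        norm_num
      have hsub : ((MatB (n+2)).submatrix Fin.succ j'.succ.succAbove).submatrix
            (Fin.succAbove 0) Fin.succ
          = (MatB (n+1)).submatrix Fin.succ j'.succAbove := by
        conv_rhs => rw [← matB_shift]
        ext i k
        simp only [Matrix.submatrix_apply, Fin.succAbove_zero]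
        rw [Fin.succ_succAbove_succ]
      rw [h00, hsub, ih j']
      simp only [Fin.val_zero, pow_zero, one_mul, mul_one]
      have hval : (j'.succ : ℕ) = (j' : ℕ) + 1 := rfl
      by_cases hj : (j' : ℕ) = n + 1
      · rw [if_pos hj, if_pos (by omega)]
      · rw [if_neg hj, if_neg (by omega)]
        have : n + 1 - (j'.succ : ℕ) = n - (j' : ℕ) := by omega
        rw [this]

/-- `F_m = det 𝓜ᴮ_m` for `m ≥ 0`, and `F_{-1} = 1` (note `F_0 = 1` as well). -/
noncomputable def polyF (m : ℤ) : Polynomial ℤ :=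
  if 0 ≤ m then (MatB m.toNat).det else 1

/-- `F_n(t) = ∑_{i=1}^{n} (-1)^{i-1} t^{C(i,2)} F_{n-i}(t) + (-1)^n t^{n^2}` for `n ≥ 1`. -/
theorem polyF_recurrence :
    ∀ n : ℕ, 1 ≤ n → polyF n =
      (∑ i ∈ Finset.range n,
          (-1 : Polynomial ℤ) ^ i * ((X : Polynomial ℤ) ^ ((i + 1).choose 2) * polyF ((n : ℤ) - (i + 1)))) +
        (-1 : Polynomial ℤ) ^ n * (X : Polynomial ℤ) ^ (n ^ 2) := by
  intro n hn
  obtain ⟨m, rfl⟩ : ∃ m, n = m + 1 := ⟨n - 1, by omega⟩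
  have h0 : polyF ((m+1 : ℕ) : ℤ) = (MatB (m+1)).det := by
    unfold polyF
    rw [if_pos (by positivity), Int.toNat_natCast]
  rw [h0, Matrix.det_succ_row_zero, Fin.sum_univ_castSucc]
  congr 1
  · rw [← Fin.sum_univ_eq_sum_range]
    refine Finset.sum_congr rfl fun j _ => ?_
    have hjc : ((j.castSucc : Fin (m+2)) : ℕ) = (j : ℕ) := rfl
    have hjm : (j : ℕ) ≤ m := Nat.lt_succ_iff.mp j.isLt
    have hmd := minor_det m j.castSucc
    rw [if_neg (by omega)] at hmd
    rw [hmd]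
    have hent : MatB (m+1) 0 j.castSucc = X ^ ((j : ℕ) + 1).choose 2 := by
      simp only [MatB, Matrix.of_apply, hjc, Fin.val_zero]
      rw [if_neg (by omega), if_pos (by omega), Nat.sub_zero]
    have hpf : polyF (((m+1 : ℕ) : ℤ) - ((j : ℕ) + 1)) = (MatB (m - (j : ℕ))).det := by
      unfold polyF
      rw [if_pos (by push_cast; omega)]
      have h2 : ((((m+1 : ℕ) : ℤ)) - ((j : ℕ) + 1)).toNat = m - (j : ℕ) := by omega
      rw [h2]
    rw [hent, hjc, hpf]
    ring
  · have hmd := minor_det m (Fin.last (m+1))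
    rw [if_pos (by simp)] at hmd
    rw [hmd]
    have hent : MatB (m+1) 0 (Fin.last (m+1)) = X ^ ((m+1) ^ 2) := by
      simp only [MatB, Matrix.of_apply, Fin.val_last, Fin.val_zero]
      simp
    rw [hent]
    simp [Fin.val_last]
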